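/- For every μ > 0 and every positive integer k, the sum over all r ∈ ℕ^k (with ℕ = {1,2,...}) of the negative parts min(π²|r|² − μ, 0) is bounded below by −L_k^cl · μ^(1+k/2), where L_k^cl = (1 + k/2)^(-1) · ((1 + 2/k) K_k^cl)^(-k/2) and K_k^cl = (k/(k+2)) · 4π²/ω_k^(2/k), with ω_k the volume of the unit ball in ℝ^k. -/

import Mathlib

open MeasureTheory

open Metric Set

/-- Volume of the unit ball in `ℝ^k`. -/
noncomputable def unitBallVol (k : ℕ) : ℝ :=
  (volume (Metric.ball (0 : EuclideanSpace ℝ (Fin k)) 1)).toReal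

/-- The semiclassical kinetic-energy constant `K_k^cl` (spin number `q = 1`). -/
noncomputable def Kcl (k : ℕ) : ℝ :=
  ((k : ℝ) / (k + 2)) * (4 * Real.pi ^ 2) / (unitBallVol k) ^ ((2 : ℝ) / k)

/-- The semiclassical eigenvalue-sum constant `L_k^cl`. -/
noncomputable def Lcl (k : ℕ) : ℝ :=
  (1 + (k : ℝ) / 2)⁻¹ * ((1 + (2 : ℝ) / k) * Kcl k) ^ (-(k : ℝ) / 2)

noncomputable def G (k : ℕ) (μ : ℝ) : (Fin k → ℝ) → ℝ :=
  fun x => max (μ - Real.pi ^ 2 * ∑ i, x i ^ 2) 0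

noncomputable def g (k : ℕ) (μ : ℝ) : (Fin k → ℕ+) → ℝ :=
  fun r => max (μ - Real.pi ^ 2 * ∑ i, ((r i : ℝ)) ^ 2) 0

lemma integral_radial (k : ℕ) (hk : 1 ≤ k) (μ : ℝ) (hμ : 0 < μ) :
    ∫ y in Ioi (0:ℝ), y ^ (k-1) * max (μ - Real.pi ^ 2 * y ^ 2) 0
      = μ ^ (1 + (k:ℝ)/2) / Real.pi ^ k * (1/k - 1/(k+2)) := by
  have hπ : (0:ℝ) < Real.pi := Real.pi_pos
  set R : ℝ := Real.sqrt μ / Real.pi with hRdef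
  have hR : 0 < R := div_pos (Real.sqrt_pos.mpr hμ) hπ
  set f : ℝ → ℝ := fun y => y ^ (k-1) * max (μ - Real.pi ^ 2 * y ^ 2) 0 with hf
  have hvanish : ∀ y ∈ Ioi (0:ℝ) \ Ioc 0 R, f y = 0 := by
    intro y hy
    have hy1 : R < y := by
      rcases hy with ⟨h1, h2⟩
      by_contra h
      exact h2 ⟨h1, not_lt.mp h⟩
    have : μ - Real.pi ^ 2 * y ^ 2 ≤ 0 := by
      have h1 : Real.sqrt μ < Real.pi * y := by
        rw [hRdef, div_lt_iff₀ hπ] at hy1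
        linarith [hy1]
      have h2 : Real.sqrt μ ^ 2 < (Real.pi * y) ^ 2 := by
        apply pow_lt_pow_left₀ h1 (Real.sqrt_nonneg μ) (by norm_num)
      rw [Real.sq_sqrt hμ.le] at h2
      nlinarith
    simp [hf, max_eq_right this]
  have h1 : ∫ y in Ioi (0:ℝ), f y = ∫ y in Ioc (0:ℝ) R, f y := by
    exact setIntegral_eq_of_subset_of_forall_diff_eq_zero measurableSet_Ioi
      Ioc_subset_Ioi_self hvanish
  have h2 : ∫ y in Ioc (0:ℝ) R, f y = ∫ y in Ioc (0:ℝ) R, (μ * y ^ (k-1) - Real.pi ^ 2 * y ^ (k+1)) := by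
    apply setIntegral_congr_fun measurableSet_Ioc
    intro y hy
    have hy0 : 0 < y := hy.1
    have hmax : μ - Real.pi ^ 2 * y ^ 2 ≥ 0 := by
      have h1 : Real.pi * y ≤ Real.sqrt μ := by
        have := hy.2
        rw [hRdef, le_div_iff₀ hπ] at this
        linarith
      have h2 : (Real.pi * y) ^ 2 ≤ Real.sqrt μ ^ 2 :=
        pow_le_pow_left₀ (by positivity) h1 2
      rw [Real.sq_sqrt hμ.le] at h2
      nlinarith
    rw [hf]
    simp only [max_eq_left hmax]
    have : y ^ (k - 1) * y ^ 2 = y ^ (k + 1) := by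
      rw [← pow_add]
      congr 1
      omega
    rw [mul_sub, ← mul_assoc, mul_comm (y ^ (k-1)) μ, mul_comm (y ^ (k-1)) (Real.pi ^2),
      mul_assoc, this]
  rw [h1, h2, ← intervalIntegral.integral_of_le hR.le]
  rw [intervalIntegral.integral_sub ((intervalIntegral.intervalIntegrable_pow _).const_mul μ)
      ((intervalIntegral.intervalIntegrable_pow _).const_mul _),
    intervalIntegral.integral_const_mul, intervalIntegral.integral_const_mul,
    integral_pow, integral_pow]
  have hk' : k - 1 + 1 = k := Nat.sub_add_cancel hk
  rw [hk']
  have hRk : R ^ k = μ ^ ((k:ℝ)/2) / Real.pi ^ k := by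
    rw [hRdef, div_pow]
    congr 1
    rw [Real.sqrt_eq_rpow, ← Real.rpow_natCast (μ ^ ((1:ℝ)/2)) k, ← Real.rpow_mul hμ.le]
    congr 1
    ring
  have hRk2 : R ^ (k+2) = μ ^ ((k:ℝ)/2) * μ / Real.pi ^ (k+2) := by
    rw [hRdef, div_pow]
    congr 1
    rw [pow_add]
    have h1 : (√μ) ^ k = μ ^ ((k:ℝ)/2) := by
      rw [Real.sqrt_eq_rpow, ← Real.rpow_natCast (μ ^ ((1:ℝ)/2)) k, ← Real.rpow_mul hμ.le]
      congr 1
      ring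
    rw [h1, Real.sq_sqrt hμ.le]
  have hμ1 : μ ^ (1 + (k:ℝ)/2) = μ * μ ^ ((k:ℝ)/2) := by
    rw [Real.rpow_add hμ, Real.rpow_one]
  rw [hRk, hRk2, hμ1]
  have hk0 : ((k:ℝ)) ≠ 0 := by positivity
  have hπ0 : Real.pi ≠ 0 := Real.pi_ne_zero
  have hk2 : ((k:ℝ)) + 2 ≠ 0 := by positivity
  have hc : ((k - 1 : ℕ) : ℝ) + 1 = (k : ℝ) := by
    push_cast [Nat.cast_sub hk]
    ring
  rw [zero_pow (by omega), zero_pow (by omega), hc]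
  push_cast
  field_simp
  ring


def cube {k : ℕ} (p : (Fin k → Bool) × (Fin k → ℕ+)) : Set (Fin k → ℝ) :=
  Set.univ.pi fun i => if p.1 i then Set.Ioc ((p.2 i : ℝ) - 1) (p.2 i)
    else Set.Ico (-(p.2 i : ℝ)) (-(p.2 i : ℝ) + 1)

lemma cube_measurable {k : ℕ} (p : (Fin k → Bool) × (Fin k → ℕ+)) :
    MeasurableSet (cube p) := by
  apply MeasurableSet.univ_pi
  intro i
  split
  · exact measurableSet_Ioc
  · exact measurableSet_Ico

lemma cube_volume {k : ℕ} (p : (Fin k → Bool) × (Fin k → ℕ+)) :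
    volume (cube p) = 1 := by
  rw [cube, volume_pi_pi]
  have : ∀ i : Fin k, volume (if p.1 i then Set.Ioc ((p.2 i : ℝ) - 1) (p.2 i)
      else Set.Ico (-(p.2 i : ℝ)) (-(p.2 i : ℝ) + 1)) = 1 := by
    intro i
    split
    · rw [Real.volume_Ioc]
      norm_num
    · rw [Real.volume_Ico]
      norm_num
  simp [this]

lemma one_le_coe {n : ℕ+} : (1:ℝ) ≤ (n : ℝ) := by exact_mod_cast n.one_le

lemma sq_le_of_mem_cube {k : ℕ} {p : (Fin k → Bool) × (Fin k → ℕ+)} {x : Fin k → ℝ}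
    (hx : x ∈ cube p) (i : Fin k) : x i ^ 2 ≤ ((p.2 i : ℝ)) ^ 2 := by
  have h : x i ∈ (if p.1 i then Set.Ioc ((p.2 i : ℝ) - 1) (p.2 i)
      else Set.Ico (-(p.2 i : ℝ)) (-(p.2 i : ℝ) + 1)) := hx i (mem_univ i)
  have h1 : (1:ℝ) ≤ (p.2 i : ℝ) := one_le_coe
  apply sq_le_sq'
  · split at h
    · rcases h with ⟨h2, h3⟩; linarith
    · rcases h with ⟨h2, h3⟩; linarith
  · split at h
    · rcases h with ⟨h2, h3⟩; linarith
    · rcases h with ⟨h2, h3⟩; linarith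

lemma g_le_G_on_cube {k : ℕ} (μ : ℝ) {p : (Fin k → Bool) × (Fin k → ℕ+)} {x : Fin k → ℝ}
    (hx : x ∈ cube p) : g k μ p.2 ≤ G k μ x := by
  apply max_le_max _ le_rfl
  have : ∑ i, x i ^ 2 ≤ ∑ i, ((p.2 i : ℝ)) ^ 2 :=
    Finset.sum_le_sum fun i _ => sq_le_of_mem_cube hx i
  nlinarith [Real.pi_pos]

lemma cube_disjoint {k : ℕ} {p q : (Fin k → Bool) × (Fin k → ℕ+)} (hpq : p ≠ q) :
    Disjoint (cube p) (cube q) := by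
  rw [Set.disjoint_left]
  intro x hx hx'
  apply hpq
  have key : ∀ i, p.1 i = q.1 i ∧ p.2 i = q.2 i := by
    intro i
    have h1 : x i ∈ (if p.1 i then Set.Ioc ((p.2 i : ℝ) - 1) (p.2 i)
        else Set.Ico (-(p.2 i : ℝ)) (-(p.2 i : ℝ) + 1)) := hx i (mem_univ i)
    have h2 : x i ∈ (if q.1 i then Set.Ioc ((q.2 i : ℝ) - 1) (q.2 i)
        else Set.Ico (-(q.2 i : ℝ)) (-(q.2 i : ℝ) + 1)) := hx' i (mem_univ i)
    have ha : (1:ℝ) ≤ (p.2 i : ℝ) := one_le_coe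
    have hb : (1:ℝ) ≤ (q.2 i : ℝ) := one_le_coe
    have hcast : ∀ {a b : ℕ+}, (a:ℝ) < (b:ℝ) + 1 → ∀ {c d : ℕ+}, c = a → d = b → (a:ℕ) ≤ (b:ℕ) := by
      intro a b hab c d _ _
      have : (a:ℝ) < (b:ℝ) + 1 := hab
      have : ((a:ℕ):ℝ) < ((b:ℕ):ℝ) + 1 := by exact_mod_cast this
      have := this
      exact_mod_cast Nat.lt_succ_iff.mp (by exact_mod_cast ‹((a:ℕ):ℝ) < ((b:ℕ):ℝ) + 1›)
    cases hp : p.1 i <;> cases hq : q.1 i <;>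
      simp only [hp, hq, if_true, if_false, Bool.false_eq_true, ite_true, ite_false] at h1 h2
    · -- both false : Ico (-a) (-a+1), Ico (-b) (-b+1)
      refine ⟨rfl, ?_⟩
      have hle1 : (p.2 i : ℕ) ≤ (q.2 i : ℕ) := by
        by_contra hlt
        push_neg at hlt
        have : ((q.2 i : ℕ):ℝ) + 1 ≤ ((p.2 i : ℕ):ℝ) := by exact_mod_cast hlt
        rcases h1 with ⟨a1, a2⟩; rcases h2 with ⟨b1, b2⟩
        push_cast at this
        linarith
      have hle2 : (q.2 i : ℕ) ≤ (p.2 i : ℕ) := by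
        by_contra hlt
        push_neg at hlt
        have : ((p.2 i : ℕ):ℝ) + 1 ≤ ((q.2 i : ℕ):ℝ) := by exact_mod_cast hlt
        rcases h1 with ⟨a1, a2⟩; rcases h2 with ⟨b1, b2⟩
        push_cast at this
        linarith
      exact PNat.coe_injective (le_antisymm hle1 hle2)
    · -- p false, q true : x < -a+1 ≤ 0 and x > b-1 ≥ 0
      exfalso
      rcases h1 with ⟨a1, a2⟩; rcases h2 with ⟨b1, b2⟩
      linarith
    · exfalso
      rcases h1 with ⟨a1, a2⟩; rcases h2 with ⟨b1, b2⟩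
      linarith
    · -- both true
      refine ⟨rfl, ?_⟩
      have hle1 : (p.2 i : ℕ) ≤ (q.2 i : ℕ) := by
        by_contra hlt
        push_neg at hlt
        have : ((q.2 i : ℕ):ℝ) + 1 ≤ ((p.2 i : ℕ):ℝ) := by exact_mod_cast hlt
        rcases h1 with ⟨a1, a2⟩; rcases h2 with ⟨b1, b2⟩
        push_cast at this
        linarith
      have hle2 : (q.2 i : ℕ) ≤ (p.2 i : ℕ) := by
        by_contra hlt
        push_neg at hlt
        have : ((p.2 i : ℕ):ℝ) + 1 ≤ ((q.2 i : ℕ):ℝ) := by exact_mod_cast hlt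
        rcases h1 with ⟨a1, a2⟩; rcases h2 with ⟨b1, b2⟩
        push_cast at this
        linarith
      exact PNat.coe_injective (le_antisymm hle1 hle2)
  ext1
  · funext i; exact (key i).1
  · funext i; exact (key i).2


lemma G_nonneg (k : ℕ) (μ : ℝ) (x : Fin k → ℝ) : 0 ≤ G k μ x := le_max_right _ _

lemma G_integrable (k : ℕ) (μ : ℝ) (hμ : 0 < μ) : Integrable (G k μ) := by
  have hcont : Continuous (G k μ) := by
    apply Continuous.max _ continuous_const
    exact continuous_const.sub (continuous_const.mul
      (continuous_finset_sum _ fun i _ => (continuous_apply i).pow 2))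
  apply hcont.integrable_of_hasCompactSupport
  apply HasCompactSupport.intro (isCompact_closedBall (0 : Fin k → ℝ) (Real.sqrt μ))
  intro x hx
  rw [mem_closedBall, dist_zero_right] at hx
  push_neg at hx
  have : ∃ i, Real.sqrt μ < |x i| := by
    by_contra h
    push_neg at h
    have : ‖x‖ ≤ Real.sqrt μ := by
      apply pi_norm_le_iff_of_nonneg (Real.sqrt_nonneg μ) |>.mpr
      intro i
      rw [Real.norm_eq_abs]
      exact h i
    linarith
  obtain ⟨i, hi⟩ := this
  have h1 : μ < x i ^ 2 := by
    have := pow_lt_pow_left₀ hi (Real.sqrt_nonneg μ) (two_ne_zero)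
    rwa [Real.sq_sqrt hμ.le, sq_abs] at this
  have h2 : x i ^ 2 ≤ ∑ j, x j ^ 2 :=
    Finset.single_le_sum (fun j _ => sq_nonneg (x j)) (Finset.mem_univ i)
  have hπ : (1:ℝ) ≤ Real.pi ^ 2 := by nlinarith [Real.pi_gt_three]
  have hsum : (0:ℝ) ≤ ∑ j, x j ^ 2 := Finset.sum_nonneg fun j _ => sq_nonneg _
  rw [G]
  apply max_eq_right
  nlinarith

lemma g_support (k : ℕ) (μ : ℝ) (hμ : 0 < μ) (r : Fin k → ℕ+)
    (hr : r ∉ Fintype.piFinset fun _ : Fin k =>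
      Finset.Icc (1:ℕ+) ⟨⌈Real.sqrt μ⌉₊ + 1, Nat.succ_pos _⟩) :
    g k μ r = 0 := by
  rw [Fintype.mem_piFinset] at hr
  push_neg at hr
  obtain ⟨i, hi⟩ := hr
  have hi := mt Finset.mem_Icc.mpr hi
  push_neg at hi
  have hi' := hi (r i).one_le
  replace hi' := not_le.mp hi'
  have hN : (⌈Real.sqrt μ⌉₊ + 1 : ℕ) < (r i : ℕ) := by exact_mod_cast hi'
  have h1 : Real.sqrt μ < ((r i : ℕ) : ℝ) := by
    calc Real.sqrt μ ≤ (⌈Real.sqrt μ⌉₊ : ℝ) := Nat.le_ceil _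
    _ < ((r i : ℕ) : ℝ) := by exact_mod_cast Nat.lt_of_succ_lt hN
  have h2 : μ < ((r i : ℝ)) ^ 2 := by
    have h3 : ((r i : ℕ) : ℝ) = ((r i : ℝ)) := by norm_cast
    rw [h3] at h1
    have := pow_lt_pow_left₀ h1 (Real.sqrt_nonneg μ) (two_ne_zero)
    rwa [Real.sq_sqrt hμ.le] at this
  have hsumge : ((r i : ℝ)) ^ 2 ≤ ∑ j, ((r j : ℝ)) ^ 2 :=
    Finset.single_le_sum (f := fun j => ((r j : ℝ)) ^ 2) (fun j _ => sq_nonneg _)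
      (Finset.mem_univ i)
  have hπ : (1:ℝ) ≤ Real.pi ^ 2 := by nlinarith [Real.pi_gt_three]
  have hsum : (0:ℝ) ≤ ∑ j, ((r j : ℝ)) ^ 2 := Finset.sum_nonneg fun j _ => sq_nonneg _
  rw [g]
  apply max_eq_right
  nlinarith

lemma sum_le_integral (k : ℕ) (hk : 1 ≤ k) (μ : ℝ) (hμ : 0 < μ) :
    (2:ℝ) ^ k * ∑' r : Fin k → ℕ+, g k μ r ≤ ∫ x : Fin k → ℝ, G k μ x := by
  set S : Finset (Fin k → ℕ+) := Fintype.piFinset fun _ : Fin k =>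
      Finset.Icc (1:ℕ+) ⟨⌈Real.sqrt μ⌉₊ + 1, Nat.succ_pos _⟩ with hS
  rw [tsum_eq_sum (g_support k μ hμ · ·)]
  set T : Finset ((Fin k → Bool) × (Fin k → ℕ+)) := Finset.univ ×ˢ S with hT
  have hcard : (2:ℝ) ^ k * ∑ r ∈ S, g k μ r = ∑ p ∈ T, g k μ p.2 := by
    rw [hT, Finset.sum_product]
    have heq : ∀ x : Fin k → Bool, ∑ y ∈ S, g k μ ((x, y).2) = ∑ y ∈ S, g k μ y :=
      fun _ => rfl
    rw [Finset.sum_congr rfl (fun x _ => heq x), Finset.sum_const, Finset.card_univ,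
      nsmul_eq_mul]
    norm_num
  rw [hcard]
  have hint := G_integrable k μ hμ
  have step : ∀ p ∈ T, g k μ p.2 ≤ ∫ x in cube p, G k μ x := by
    intro p _
    have := setIntegral_ge_of_const_le (cube_measurable p)
      (by rw [cube_volume p]; exact ENNReal.one_ne_top) (fun x hx => g_le_G_on_cube μ hx)
      hint.integrableOn
    rwa [measureReal_def, cube_volume p, ENNReal.toReal_one, one_smul] at this
  calc ∑ p ∈ T, g k μ p.2 ≤ ∑ p ∈ T, ∫ x in cube p, G k μ x := Finset.sum_le_sum step
  _ = ∫ x in ⋃ p ∈ T, cube p, G k μ x := by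
    rw [integral_biUnion_finset T (fun p _ => cube_measurable p)
      (fun p _ q _ hpq => cube_disjoint hpq) (fun p _ => hint.integrableOn)]
  _ ≤ ∫ x, G k μ x := setIntegral_le_integral hint (ae_of_all _ (G_nonneg k μ))


lemma integral_G (k : ℕ) (hk : 1 ≤ k) (μ : ℝ) (hμ : 0 < μ) :
    ∫ x : Fin k → ℝ, G k μ x
      = (k * unitBallVol k) * (μ ^ (1 + (k:ℝ)/2) / Real.pi ^ k * (1/k - 1/(k+2))) := by
  haveI hne : Nonempty (Fin k) := ⟨⟨0, hk⟩⟩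
  haveI : Nontrivial (EuclideanSpace ℝ (Fin k)) := by
    refine ⟨⟨0, EuclideanSpace.single ⟨0, hk⟩ 1, ?_⟩⟩
    intro h
    have := congrArg (fun v => v ⟨0, hk⟩) h.symm
    simp [EuclideanSpace.single] at this
  have hpi : ∫ x : Fin k → ℝ, G k μ x
      = ∫ x : EuclideanSpace ℝ (Fin k), max (μ - Real.pi ^ 2 * ‖x‖ ^ 2) 0 := by
    rw [← (EuclideanSpace.volume_preserving_symm_measurableEquiv_toLp (Fin k)).integral_comp
        (MeasurableEquiv.toLp 2 (Fin k → ℝ)).symm.measurableEmbedding (G k μ)]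
    apply integral_congr_ae
    filter_upwards with x
    have hnorm : ‖x‖ ^ 2 = ∑ i, x i ^ 2 := by
      rw [EuclideanSpace.norm_eq, Real.sq_sqrt (by positivity)]
      simp [sq_abs]
    rw [hnorm]
    rfl
  rw [hpi]
  rw [integral_fun_norm_addHaar volume (fun t => max (μ - Real.pi ^ 2 * t ^ 2) 0)]
  rw [finrank_euclideanSpace_fin]
  rw [nsmul_eq_mul, smul_eq_mul]
  simp only [smul_eq_mul]
  rw [integral_radial k hk μ hμ]
  rw [unitBallVol, measureReal_def]
  ring


lemma unitBallVol_pos (k : ℕ) : 0 < unitBallVol k := by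
  rw [unitBallVol]
  refine ENNReal.toReal_pos (ne_of_gt (measure_ball_pos volume 0 one_pos))
    (ne_of_lt measure_ball_lt_top)

lemma Lcl_eq (k : ℕ) (hk : 1 ≤ k) :
    Lcl k = 2 / ((k:ℝ) + 2) * unitBallVol k / (2 * Real.pi) ^ k := by
  have hπ : (0:ℝ) < Real.pi := Real.pi_pos
  have hω : 0 < unitBallVol k := unitBallVol_pos k
  have hk0 : ((k:ℝ)) ≠ 0 := by positivity
  have hk2 : ((k:ℝ)) + 2 ≠ 0 := by positivity
  set ω := unitBallVol k
  have h1 : (1 + (2:ℝ)/k) * Kcl k = 4 * Real.pi ^ 2 / ω ^ ((2:ℝ)/k) := by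
    rw [Kcl, show unitBallVol k = ω from rfl]
    have hωr : (0:ℝ) < ω ^ ((2:ℝ)/k) := Real.rpow_pos_of_pos hω _
    field_simp
  have h2 : (4 * Real.pi ^ 2 / ω ^ ((2:ℝ)/k)) ^ (-(k:ℝ)/2) = ω / (2 * Real.pi) ^ k := by
    rw [Real.div_rpow (by positivity) (Real.rpow_nonneg hω.le _)]
    have e1 : (4 * Real.pi ^ 2 : ℝ) = (2 * Real.pi) ^ (2:ℕ) := by ring
    rw [e1, ← Real.rpow_natCast (2*Real.pi) 2,
      ← Real.rpow_mul (by positivity : (0:ℝ) ≤ 2*Real.pi), ← Real.rpow_mul hω.le]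
    have e2 : ((2:ℕ):ℝ) * (-(k:ℝ)/2) = -(k:ℝ) := by push_cast; ring
    have e3 : (2:ℝ)/(k:ℝ) * (-(k:ℝ)/2) = -1 := by field_simp
    rw [e2, e3, Real.rpow_neg (by positivity), Real.rpow_natCast, Real.rpow_neg_one]
    field_simp
  rw [Lcl, h1, h2]
  have e4 : (1 + (k:ℝ)/2)⁻¹ = 2/((k:ℝ)+2) := by
    rw [inv_eq_one_div]
    field_simp
    ring
  rw [e4, mul_div_assoc]


/-- Berezin–Li–Yau: the sum of the negative parts of the Dirichlet eigenvalues
`π²|r|² - μ`, `r ∈ ℕ^k` (`ℕ = {1,2,...}`), is bounded below by `-L_k^cl μ^{1+k/2}`. -/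
theorem berezin_li_yau (k : ℕ) (hk : 1 ≤ k) (μ : ℝ) (hμ : 0 < μ) :
    -(Lcl k) * μ ^ (1 + (k : ℝ) / 2) ≤
      ∑' r : Fin k → ℕ+, min (Real.pi ^ 2 * ∑ i, ((r i : ℝ)) ^ 2 - μ) 0 := by
  have hmin : ∀ r : Fin k → ℕ+,
      min (Real.pi ^ 2 * ∑ i, ((r i : ℝ)) ^ 2 - μ) 0 = -(g k μ r) := by
    intro r
    rw [g]
    rcases le_total (Real.pi ^ 2 * ∑ i, ((r i : ℝ)) ^ 2 - μ) 0 with h | h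
    · rw [min_eq_left h, max_eq_left (by linarith)]
      ring
    · rw [min_eq_right h, max_eq_right (by linarith)]
      ring
  rw [tsum_congr hmin, tsum_neg, neg_mul, neg_le_neg_iff]
  have h := sum_le_integral k hk μ hμ
  rw [integral_G k hk μ hμ] at h
  have h2 : (0:ℝ) < (2:ℝ)^k := by positivity
  rw [← le_div_iff₀' h2] at h
  refine h.trans (le_of_eq ?_)
  rw [Lcl_eq k hk, mul_pow]
  have hπ : Real.pi ≠ 0 := Real.pi_ne_zero
  have hk0 : ((k:ℝ)) ≠ 0 := by positivity
  have hk2 : ((k:ℝ)) + 2 ≠ 0 := by positivity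
  field_simp
  ring
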